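/- Let T be a tree quiver, v a vertex, and E an indecomposable injective left R-module. Then the representation e_*^v(E), which assigns E to every vertex w admitting a (necessarily unique) path from w to v with identity structure maps along that path and 0 elsewhere, is an indecomposable injective object of (T, R-Mod). -/

import Mathlib

open CategoryTheory CategoryTheory.Limits

/-- The representation `e_*^v(E)` of a quiver `Q` (right adjoint of evaluation at `v`):
to a vertex `w` it assigns the product of copies of `E` indexed by the paths from `w` to `v`,
with structure maps given by precomposition of paths.  On a tree `T` this is exactly the
representation assigning `E` (with identity structure maps) to every vertex `w` admitting a
(necessarily unique) path from `w` to `v`, and `0` elsewhere, since path sets in a tree have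
at most one element. -/
@[simps] noncomputable def eStar (Q : Type) [Quiver Q] (R : Type) [Ring R] (v : Q)
    (E : Type) [AddCommGroup E] [Module R E] :
    Paths Q ⥤ ModuleCat R where
  obj w := ModuleCat.of R ((w ⟶ (Paths.of Q).obj v) → E)
  map {w w'} p := ModuleCat.ofHom (LinearMap.funLeft R E (fun q : w' ⟶ (Paths.of Q).obj v => p ≫ q))
  map_id w := by
    ext x
    simp only [Category.id_comp]
    rfl
  map_comp {w w' w''} p p' := by
    ext x
    exact congrArg x (Category.assoc p p' _)

/-- An object of an additive category is indecomposable if it is nonzero and its only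
idempotent endomorphisms are `0` and the identity. -/
def IndecomposableObj {C : Type*} [Category C] [Preadditive C] (X : C) : Prop :=
  ¬ IsZero X ∧ ∀ e : X ⟶ X, e ≫ e = e → e = 0 ∨ e = 𝟙 X

/-- An `R`-module is indecomposable if it is nonzero and its only idempotent endomorphisms
are `0` and the identity. -/
def IndecomposableModule (R : Type) [Ring R] (E : Type) [AddCommGroup E] [Module R E] : Prop :=
  Nontrivial E ∧ ∀ e : E →ₗ[R] E, e ∘ₗ e = e → e = 0 ∨ e = LinearMap.id

/-- Let `T` be a tree quiver (there is a root `r` such that every vertex admits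
a unique path from `r`), `v` a vertex, and `E` an indecomposable injective left `R`-module.
Then `e_*^v(E)` is an indecomposable injective object of `(T, R-Mod)`. -/
theorem eStar_indecomposable_injective
    (T : Type) [Quiver T] (r : T)
    (htree : ∀ w : T, ∃! _p : ((Paths.of T).obj r ⟶ (Paths.of T).obj w), True)
    (R : Type) [Ring R] (v : T) (E : Type) [AddCommGroup E] [Module R E]
    (hEinj : Module.Injective R E) (hEind : IndecomposableModule R E) :
    CategoryTheory.Injective (eStar T R v E) ∧ IndecomposableObj (eStar T R v E) := by
  -- In a tree, the endomorphisms of `v` in the path category are trivial.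
  have hsub : ∀ p : ((Paths.of T).obj v ⟶ (Paths.of T).obj v), p = 𝟙 ((Paths.of T).obj v) := by
    intro p
    obtain ⟨a, -, ha⟩ := htree v
    have h1 : a ≫ p = a := ha (a ≫ p) trivial
    have h2 : (a : Quiver.Path r v).comp p = a.comp Quiver.Path.nil := by
      exact h1
    exact Quiver.Path.comp_injective_right a h2
  constructor
  · -- Injectivity
    constructor
    intro X Y g f hf
    have hfv : Mono (f.app ((Paths.of T).obj v)) := inferInstance
    have hfvinj : Function.Injective (f.app ((Paths.of T).obj v)) :=
      (ModuleCat.mono_iff_injective _).mp hfv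
    -- the linear map `X.obj v → E` corresponding to `g`
    set φ : X.obj ((Paths.of T).obj v) →ₗ[R] E :=
      { toFun := fun x => g.app ((Paths.of T).obj v) x (𝟙 ((Paths.of T).obj v))
        map_add' := by
          intro a b
          show g.app ((Paths.of T).obj v) (a + b) (𝟙 ((Paths.of T).obj v)) = _
          rw [map_add]; rfl
        map_smul' := by
          intro c a
          show g.app ((Paths.of T).obj v) (c • a) (𝟙 ((Paths.of T).obj v)) = _
          rw [map_smul]; rfl } with hφ
    haveI := hEinj
    obtain ⟨h, hh0⟩ := Module.Injective.extension_property R E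
      (X.obj ((Paths.of T).obj v)) (Y.obj ((Paths.of T).obj v))
      (f.app ((Paths.of T).obj v)).hom hfvinj φ
    have hh : ∀ x, h (f.app ((Paths.of T).obj v) x) = φ x := fun x => DFunLike.congr_fun hh0 x
    -- build the extension
    refine ⟨{ app := fun w => ModuleCat.ofHom (LinearMap.pi fun q : (w ⟶ (Paths.of T).obj v) =>
                h.comp (Y.map q).hom)
              naturality := ?_ }, ?_⟩
    · intro w w' p
      ext y
      funext q
      show h (Y.map q (Y.map p y)) = h (Y.map (p ≫ q) y)
      rw [Y.map_comp]
      rfl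
    · ext w x
      funext q
      show h (Y.map q (f.app w x)) = g.app w x q
      have h1 : Y.map q (f.app w x) = f.app ((Paths.of T).obj v) (X.map q x) :=
        (congrArg (fun (m : X.obj w ⟶ Y.obj ((Paths.of T).obj v)) => m x)
          (f.naturality q)).symm
      rw [h1, hh]
      -- now use naturality of `g`
      have h2 : g.app ((Paths.of T).obj v) (X.map q x) (𝟙 ((Paths.of T).obj v)) =
          g.app w x (q ≫ 𝟙 ((Paths.of T).obj v)) :=
        congrArg (fun (m : X.obj w ⟶ (eStar T R v E).obj ((Paths.of T).obj v)) =>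
          m x (𝟙 ((Paths.of T).obj v))) (g.naturality q)
      have h2' : g.app ((Paths.of T).obj v) (X.map q x) (𝟙 ((Paths.of T).obj v)) =
          g.app w x q := by rw [h2, Category.comp_id]
      exact h2'
  · -- Indecomposability
    obtain ⟨hnt, hid⟩ := hEind
    constructor
    · -- nonzero
      intro hz
      obtain ⟨e, he⟩ := exists_ne (0 : E)
      have h0 : (𝟙 (eStar T R v E)) = 0 := hz.eq_of_src _ _
      have happ : e = 0 := congrArg (fun (m : eStar T R v E ⟶ eStar T R v E) =>
        m.app ((Paths.of T).obj v) (fun _ => e) (𝟙 ((Paths.of T).obj v))) h0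
      exact he happ
    · intro η hη
      -- the induced idempotent on `E`
      set ε : E →ₗ[R] E :=
        { toFun := fun e => η.app ((Paths.of T).obj v)
            (fun _ : ((Paths.of T).obj v ⟶ (Paths.of T).obj v) => e) (𝟙 ((Paths.of T).obj v))
          map_add' := by
            intro a b
            exact congrFun (map_add (η.app ((Paths.of T).obj v)).hom (fun _ => a) (fun _ => b)) _
          map_smul' := by
            intro c a
            exact congrFun (map_smul (η.app ((Paths.of T).obj v)).hom c (fun _ => a)) _ } with hε
      have key : ∀ (w : Paths T) (x : (eStar T R v E).obj w) (q : w ⟶ (Paths.of T).obj v),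
          η.app w x q = ε (x q) := by
        intro w x q
        have h2 : η.app ((Paths.of T).obj v) (fun p => x (q ≫ p)) (𝟙 ((Paths.of T).obj v)) =
            η.app w x (q ≫ 𝟙 ((Paths.of T).obj v)) :=
          congrArg (fun (m : (eStar T R v E).obj w ⟶
            (eStar T R v E).obj ((Paths.of T).obj v)) => m x (𝟙 ((Paths.of T).obj v)))
            (η.naturality q)
        have h3 : (fun p : ((Paths.of T).obj v ⟶ (Paths.of T).obj v) => x (q ≫ p)) =
            (fun _ => x q) := by
          funext p
          rw [hsub p, Category.comp_id]
        rw [h3, Category.comp_id] at h2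
        exact h2.symm
      have hidem : ε ∘ₗ ε = ε := by
        ext e
        have h4 : (fun _ : ((Paths.of T).obj v ⟶ (Paths.of T).obj v) => ε e) =
            η.app ((Paths.of T).obj v) (fun _ => e) := by
          funext p
          rw [hsub p]
          rfl
        have h5 : η.app ((Paths.of T).obj v) (η.app ((Paths.of T).obj v) (fun _ => e))
            (𝟙 ((Paths.of T).obj v)) =
            η.app ((Paths.of T).obj v) (fun _ => e) (𝟙 ((Paths.of T).obj v)) :=
          congrArg (fun (m : eStar T R v E ⟶ eStar T R v E) =>
            m.app ((Paths.of T).obj v) (fun _ => e) (𝟙 ((Paths.of T).obj v))) hη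
        show ε (ε e) = ε e
        calc ε (ε e) = η.app ((Paths.of T).obj v) (η.app ((Paths.of T).obj v) (fun _ => e))
              (𝟙 ((Paths.of T).obj v)) := by
              show η.app ((Paths.of T).obj v) (fun _ => ε e) (𝟙 ((Paths.of T).obj v)) = _
              rw [h4]
          _ = η.app ((Paths.of T).obj v) (fun _ => e) (𝟙 ((Paths.of T).obj v)) := h5
          _ = ε e := rfl
      rcases hid ε hidem with h0 | h1
      · left
        ext w x
        funext q
        rw [key w x q, h0]
        rfl
      · right
        ext w x
        funext q
        rw [key w x q, h1]
        rfl
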